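/- Let H be a complex Hilbert space and let A, B be bounded linear operators on H such that A T A* = B T B* for every bounded linear operator T on H. Then there exists θ ∈ [0, 1) such that B = exp(2πiθ)·A. -/

import Mathlib

open scoped Real InnerProductSpace

/-- Let `H` be a complex Hilbert space and `A, B` bounded linear operators
on `H` such that `A T A* = B T B*` for every bounded linear operator `T` on `H`.  Then there
exists `θ ∈ [0, 1)` with `B = exp (2πiθ) • A`. -/
theorem stmt7 {H : Type*} [NormedAddCommGroup H] [InnerProductSpace ℂ H] [CompleteSpace H]
    (A B : H →L[ℂ] H) (h : ∀ T : H →L[ℂ] H, A * T * star A = B * T * star B) :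
    ∃ θ : ℝ, θ ∈ Set.Ico (0 : ℝ) 1 ∧
      B = Complex.exp (2 * π * Complex.I * θ) • A := by
  have key : ∀ x y z : H, (⟪A y, z⟫_ℂ) • A x = (⟪B y, z⟫_ℂ) • B x := by
    intro x y z
    have := congrFun (congrArg DFunLike.coe (h ((innerSL ℂ y).smulRight x))) z
    simpa [ContinuousLinearMap.mul_apply, ContinuousLinearMap.smulRight_apply,
      innerSL_apply_apply, map_smul, ContinuousLinearMap.star_eq_adjoint,
      ContinuousLinearMap.adjoint_inner_right] using this
  by_cases hA : A = 0
  · have h1 := h 1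
    rw [hA] at h1
    simp only [zero_mul, mul_one] at h1
    have hB : B = 0 := by
      have hn : ‖B‖ * ‖B‖ = 0 := by
        rw [← CStarRing.norm_self_mul_star (x := B), ← h1, norm_zero]
      have : ‖B‖ = 0 := by nlinarith [norm_nonneg B]
      exact norm_eq_zero.mp this
    exact ⟨0, ⟨le_refl _, one_pos⟩, by simp [hA, hB]⟩
  · obtain ⟨x0, hx0⟩ : ∃ x0, A x0 ≠ 0 := by
      by_contra hc
      push_neg at hc
      exact hA (ContinuousLinearMap.ext fun x => by simp [hc x])
    have hip : (⟪B x0, A x0⟫_ℂ) ≠ 0 := by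
      intro hz
      have := key x0 x0 (A x0)
      rw [hz, zero_smul, smul_eq_zero] at this
      rcases this with h' | h'
      · exact hx0 (inner_self_eq_zero.mp h')
      · exact hx0 h'
    obtain ⟨c, hBA⟩ : ∃ c : ℂ, B = c • A := by
      refine ⟨(⟪A x0, A x0⟫_ℂ) / (⟪B x0, A x0⟫_ℂ), ?_⟩
      ext x
      have hx := key x x0 (A x0)
      have : B x = ((⟪A x0, A x0⟫_ℂ) / (⟪B x0, A x0⟫_ℂ)) • A x := by
        rw [div_eq_inv_mul, mul_smul, eq_inv_smul_iff₀ hip]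
        exact hx.symm
      simpa using this
    have hAA : A * star A ≠ 0 := by
      intro hz
      have hn : ‖A‖ * ‖A‖ = 0 := by
        rw [← CStarRing.norm_self_mul_star (x := A), hz, norm_zero]
      have : ‖A‖ = 0 := by nlinarith [norm_nonneg A]
      exact hA (norm_eq_zero.mp this)
    have h1 := h 1
    rw [hBA] at h1
    simp only [mul_one] at h1
    have h2 : A * star A = (c * (starRingEnd ℂ) c) • (A * star A) := by
      calc A * star A = (c • A) * star (c • A) := h1
      _ = (c • A) * ((starRingEnd ℂ) c • star A) := by rw [star_smul]; rfl
      _ = (c * (starRingEnd ℂ) c) • (A * star A) := by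
            rw [smul_mul_assoc, mul_smul_comm, smul_smul]
    have hnorm : c * (starRingEnd ℂ) c = 1 := by
      by_contra hne
      have : (1 - c * (starRingEnd ℂ) c) • (A * star A) = 0 := by
        rw [sub_smul, one_smul, ← h2, sub_self]
      rcases smul_eq_zero.mp this with h' | h'
      · exact hne (by linear_combination -h')
      · exact hAA h'
    have habs : ‖c‖ = 1 := by
      have hmc := Complex.mul_conj c
      rw [hnorm] at hmc
      have h3 : Complex.normSq c = 1 := by exact_mod_cast hmc.symm
      have h4 := Complex.sq_norm c
      nlinarith [norm_nonneg c]
    have hcexp : Complex.exp (c.arg * Complex.I) = c := by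
      conv_rhs => rw [← Complex.norm_mul_exp_arg_mul_I c]
      rw [habs, Complex.ofReal_one, one_mul]
    have hpi : (0:ℝ) < π := Real.pi_pos
    have hpiC : (π:ℂ) ≠ 0 := Complex.ofReal_ne_zero.mpr hpi.ne'
    rcases le_or_gt 0 c.arg with ha | ha
    · refine ⟨c.arg / (2 * π), ⟨div_nonneg ha (by positivity), ?_⟩, ?_⟩
      · rw [div_lt_one (by positivity)]
        linarith [Complex.arg_le_pi c]
      · rw [hBA]
        congr 1
        rw [show (2 * (π:ℂ) * Complex.I * ((c.arg / (2 * π) : ℝ) : ℂ))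
            = (c.arg : ℂ) * Complex.I by push_cast; field_simp [hpiC]]
        exact hcexp.symm
    · refine ⟨c.arg / (2 * π) + 1, ⟨?_, ?_⟩, ?_⟩
      · have h5 : -π < c.arg := Complex.neg_pi_lt_arg c
        have h6 : (-1 : ℝ)/2 < c.arg / (2*π) := by
          rw [div_lt_div_iff₀ (by norm_num) (by positivity)]
          nlinarith
        linarith
      · have : c.arg / (2 * π) < 0 := div_neg_of_neg_of_pos ha (by positivity)
        linarith
      · rw [hBA]
        congr 1
        rw [show (2 * (π:ℂ) * Complex.I * ((c.arg / (2 * π) + 1 : ℝ) : ℂ))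
            = (c.arg : ℂ) * Complex.I + 2 * π * Complex.I by push_cast; field_simp [hpiC]]
        rw [Complex.exp_add, Complex.exp_two_pi_mul_I, mul_one]
        exact hcexp.symm
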